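/- Let K ⊂ ℝⁿ be a convex body with 0 in its interior which is strongly convex with smooth boundary, i.e. the function h_K(x) := μ_K(x)²/2 is C^∞ on ℝⁿ \ {0} and its Hessian is positive definite at every point of the unit sphere. Then the gradient map ∇h_K maps the boundary ∂K bijectively onto the boundary ∂K° of the polar body; for every y ∈ ∂K° the unique x ∈ ∂K with ⟪x, y⟫ = 1 is x = (∇h_K)⁻¹(y); moreover h_{K°}(y) = h_K((∇h_K)⁻¹(y)) for all y ∈ ℝⁿ \ {0}, and in particular h_{K°} is C^∞ on ℝⁿ \ {0} with positive definite Hessian on the unit sphere (so K° is also strongly convex with smooth boundary). -/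

import Mathlib

open MeasureTheory Real Set Filter Topology
open scoped RealInnerProductSpace

noncomputable section

/-- `h_K = μ_K²/2`, where `μ_K` is the Minkowski gauge of `K`. -/
def hGauge {n : ℕ} (K : Set (EuclideanSpace ℝ (Fin n))) (x : EuclideanSpace ℝ (Fin n)) : ℝ :=
  gauge K x ^ 2 / 2

/-- The polar body `K° = {y : ⟪x, y⟫ ≤ 1 for all x ∈ K}`. -/
def polarBodyN {n : ℕ} (K : Set (EuclideanSpace ℝ (Fin n))) : Set (EuclideanSpace ℝ (Fin n)) :=
  {y | ∀ x ∈ K, ⟪x, y⟫ ≤ 1}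

namespace SCBaux

variable {n : ℕ}

local notation "E" => EuclideanSpace ℝ (Fin n)

theorem nhds0 {K : Set E} (hK0 : 0 ∈ interior K) : K ∈ 𝓝 0 :=
  mem_interior_iff_mem_nhds.1 hK0

theorem habs {K : Set E} (hK0 : 0 ∈ interior K) : Absorbent ℝ K :=
  absorbent_nhds_zero (nhds0 hK0)

theorem hbdd {K : Set E} (hKcomp : IsCompact K) : Bornology.IsVonNBounded ℝ K :=
  (NormedSpace.isVonNBounded_iff ℝ).2 hKcomp.isBounded

theorem gauge_pos' {K : Set E} (hKcomp : IsCompact K) (hK0 : 0 ∈ interior K) {x : E}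
    (hx : x ≠ 0) : 0 < gauge K x :=
  (gauge_pos (habs hK0) (hbdd hKcomp)).2 hx

theorem frontier_iff {K : Set E} (hKconv : Convex ℝ K) (hK0 : 0 ∈ interior K) {x : E} :
    x ∈ frontier K ↔ gauge K x = 1 :=
  (gauge_eq_one_iff_mem_frontier hKconv (nhds0 hK0)).symm

theorem mem_iff_gauge_le_one {K : Set E} (hKcomp : IsCompact K) (hKconv : Convex ℝ K)
    (hK0 : 0 ∈ interior K) {x : E} : x ∈ K ↔ gauge K x ≤ 1 := by
  rw [gauge_le_one_iff_mem_closure hKconv (nhds0 hK0), hKcomp.isClosed.closure_eq]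

theorem le_gauge_of_forall_le {s : Set E} (hs : Absorbent ℝ s) (f : E →L[ℝ] ℝ)
    (hf : ∀ w ∈ s, f w ≤ 1) (x : E) : f x ≤ gauge s x := by
  by_contra h
  push_neg at h
  obtain ⟨b, hb0, hba, w, hw, rfl⟩ := exists_lt_of_gauge_lt hs h
  have : f (b • w) = b * f w := by simp
  nlinarith [hf w hw]

theorem polar_convex (K : Set E) : Convex ℝ (polarBodyN K) := by
  intro y₁ h₁ y₂ h₂ a b ha hb hab
  intro x hx
  have e : ⟪x, a • y₁ + b • y₂⟫ = a * ⟪x, y₁⟫ + b * ⟪x, y₂⟫ := by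
    rw [inner_add_right, real_inner_smul_right, real_inner_smul_right]
  rw [e]
  nlinarith [h₁ x hx, h₂ x hx]

theorem polar_isClosed (K : Set E) : IsClosed (polarBodyN K) := by
  have : polarBodyN K = ⋂ x ∈ K, {y : E | ⟪x, y⟫ ≤ 1} := by
    ext y; simp [polarBodyN]
  rw [this]
  exact isClosed_biInter fun x _ => isClosed_le (continuous_const.inner continuous_id) continuous_const

theorem polar_mem_nhds (K : Set E) (hKcomp : IsCompact K) : polarBodyN K ∈ 𝓝 0 := by
  obtain ⟨R, hR0, hR⟩ : ∃ R : ℝ, 0 < R ∧ K ⊆ Metric.closedBall 0 R := by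
    obtain ⟨R, hR⟩ := hKcomp.isBounded.subset_closedBall 0
    exact ⟨max R 1, lt_of_lt_of_le one_pos (le_max_right _ _),
      hR.trans (Metric.closedBall_subset_closedBall (le_max_left _ _))⟩
  have : Metric.ball (0 : E) R⁻¹ ⊆ polarBodyN K := by
    intro y hy x hx
    have hxR : ‖x‖ ≤ R := by simpa using hR hx
    have hyR : ‖y‖ < R⁻¹ := by simpa using hy
    calc ⟪x, y⟫ ≤ ‖x‖ * ‖y‖ := real_inner_le_norm x y
      _ ≤ R * R⁻¹ := by
          apply mul_le_mul hxR hyR.le (norm_nonneg _) hR0.le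
      _ = 1 := mul_inv_cancel₀ hR0.ne'
  exact Filter.mem_of_superset (Metric.ball_mem_nhds 0 (by positivity)) this

theorem polar_bounded (K : Set E) (hK0 : 0 ∈ interior K) :
    Bornology.IsVonNBounded ℝ (polarBodyN K) := by
  rw [NormedSpace.isVonNBounded_iff]
  obtain ⟨r, hr0, hr⟩ := Metric.mem_nhds_iff.1 (nhds0 hK0)
  apply Bornology.IsBounded.subset (Metric.isBounded_closedBall (x := (0:E)) (r := 2 / r))
  intro y hy
  simp only [Metric.mem_closedBall, dist_zero_right]
  rcases eq_or_ne y 0 with rfl | hy0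
  · simp; positivity
  · have hx : (r / 2 / ‖y‖) • y ∈ K := by
      apply hr
      simp only [Metric.mem_ball, dist_zero_right, norm_smul, Real.norm_eq_abs]
      have : ‖y‖ ≠ 0 := norm_ne_zero_iff.2 hy0
      rw [abs_of_nonneg (by positivity), div_mul_cancel₀ _ this]
      linarith
    have := hy _ hx
    rw [real_inner_smul_left, real_inner_self_eq_norm_sq] at this
    have hn : 0 < ‖y‖ := norm_pos_iff.2 hy0
    rw [div_div, div_mul_eq_mul_div, mul_comm] at this
    have h2 : ‖y‖ * ‖y‖ * r ≤ 2 * ‖y‖ := by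
      rw [div_le_one (by positivity)] at this
      nlinarith
    rw [le_div_iff₀ hr0]
    nlinarith


-- part 2
theorem polar_frontier_iff {K : Set E} (hKcomp : IsCompact K) {y : E} :
    y ∈ frontier (polarBodyN K) ↔ gauge (polarBodyN K) y = 1 :=
  (gauge_eq_one_iff_mem_frontier (polar_convex K) (polar_mem_nhds K hKcomp)).symm

theorem polar_gauge_pos {K : Set E} (hKcomp : IsCompact K) (hK0 : 0 ∈ interior K) {y : E}
    (hy : y ≠ 0) : 0 < gauge (polarBodyN K) y :=
  (gauge_pos (absorbent_nhds_zero (polar_mem_nhds K hKcomp)) (polar_bounded K hK0)).2 hy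

theorem inner_le_gauge_polar {K : Set E} (hKcomp : IsCompact K) {x y : E} (hx : x ∈ K) :
    ⟪x, y⟫ ≤ gauge (polarBodyN K) y := by
  have h := le_gauge_of_forall_le (absorbent_nhds_zero (polar_mem_nhds K hKcomp))
    (innerSL ℝ x) (fun w hw => by rw [innerSL_apply_apply]; exact hw x hx) y
  rwa [innerSL_apply_apply] at h

theorem inner_le_gauge {K : Set E} (hK0 : 0 ∈ interior K) {x y : E} (hy : y ∈ polarBodyN K) :
    ⟪x, y⟫ ≤ gauge K x := by
  have h := le_gauge_of_forall_le (habs hK0) (innerSL ℝ y)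
    (fun w hw => by rw [innerSL_apply_apply, real_inner_comm]; exact hy w hw) x
  rw [innerSL_apply_apply] at h
  rw [real_inner_comm]; exact h

theorem mem_frontier_polar_of_inner_eq_one {K : Set E} (hKcomp : IsCompact K) {x y : E}
    (hx : x ∈ K) (hy : y ∈ polarBodyN K) (hxy : ⟪x, y⟫ = 1) :
    y ∈ frontier (polarBodyN K) := by
  rw [polar_frontier_iff hKcomp]
  have h1 : (1:ℝ) ≤ gauge (polarBodyN K) y := hxy ▸ inner_le_gauge_polar hKcomp hx
  exact le_antisymm (gauge_le_one_of_mem hy) h1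

theorem exists_inner_eq_one {K : Set E} (hKcomp : IsCompact K) (hKconv : Convex ℝ K)
    (hK0 : 0 ∈ interior K) {y : E} (hy : y ∈ frontier (polarBodyN K)) :
    ∃ x : E, x ∈ frontier K ∧ ⟪x, y⟫ = 1 := by
  have hy1 : gauge (polarBodyN K) y = 1 := (polar_frontier_iff hKcomp).1 hy
  have hyp : y ∈ polarBodyN K := (polar_isClosed K).frontier_subset hy
  obtain ⟨x₀, hx₀K, hmax⟩ := hKcomp.exists_isMaxOn (f := fun x : E => ⟪x, y⟫) ⟨0, interior_subset hK0⟩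
    (Continuous.continuousOn (continuous_id.inner continuous_const))
  set c : ℝ := ⟪x₀, y⟫ with hc
  have hcmax : ∀ x ∈ K, ⟪x, y⟫ ≤ c := fun x hx => hmax hx
  have hc1 : c ≤ 1 := hyp x₀ hx₀K
  have hcge : 1 ≤ c := by
    by_contra h
    push_neg at h
    set c' : ℝ := (c + 1) / 2 with hc'
    have hc'0 : 0 < c' := by
      have : (0:ℝ) ≤ c := by simpa using hcmax 0 (interior_subset hK0)
      rw [hc']; linarith
    have hc'lt : c' < 1 := by rw [hc']; linarith
    have hcc' : c ≤ c' := by rw [hc']; linarith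
    have hmem : c'⁻¹ • y ∈ polarBodyN K := by
      intro x hx
      rw [real_inner_smul_right]
      calc c'⁻¹ * ⟪x, y⟫ ≤ c'⁻¹ * c' := by
            apply mul_le_mul_of_nonneg_left ((hcmax x hx).trans hcc') (by positivity)
        _ = 1 := inv_mul_cancel₀ hc'0.ne'
    have : gauge (polarBodyN K) y ≤ c' := by
      have h2 : y = c' • (c'⁻¹ • y) := by rw [smul_smul, mul_inv_cancel₀ hc'0.ne', one_smul]
      calc gauge (polarBodyN K) y = gauge (polarBodyN K) (c' • (c'⁻¹ • y)) := by rw [← h2]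
        _ = c' * gauge (polarBodyN K) (c'⁻¹ • y) := by
            rw [gauge_smul_of_nonneg hc'0.le]; simp
        _ ≤ c' * 1 := by
            apply mul_le_mul_of_nonneg_left (gauge_le_one_of_mem hmem) hc'0.le
        _ = c' := mul_one _
    rw [hy1] at this
    linarith
  have hceq : c = 1 := le_antisymm hc1 hcge
  refine ⟨x₀, ?_, hceq⟩
  rw [frontier_iff hKconv hK0]
  have hle : gauge K x₀ ≤ 1 := (mem_iff_gauge_le_one hKcomp hKconv hK0).1 hx₀K
  have hge : 1 ≤ gauge K x₀ := by
    have h2 := inner_le_gauge hK0 (x := x₀) hyp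
    rw [← hc, hceq] at h2
    linarith
  linarith


-- part 3 : calculus
theorem hGauge_smul {K : Set E} {t : ℝ} (ht : 0 ≤ t) (x : E) :
    hGauge K (t • x) = t ^ 2 * hGauge K x := by
  unfold hGauge
  rw [gauge_smul_of_nonneg ht, smul_eq_mul]
  ring

theorem frontier_ne_zero {K : Set E} (hKconv : Convex ℝ K) (hK0 : 0 ∈ interior K) {x : E}
    (hx : x ∈ frontier K) : x ≠ 0 := by
  intro h
  have := (frontier_iff hKconv hK0).1 hx
  rw [h, gauge_zero] at this
  norm_num at this

theorem contDiffAt_h {K : Set E} (hsmooth : ContDiffOn ℝ (⊤ : ℕ∞) (hGauge K) {0}ᶜ) {x : E}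
    (hx : x ≠ 0) : ContDiffAt ℝ (⊤ : ℕ∞) (hGauge K) x :=
  hsmooth.contDiffAt (isOpen_compl_singleton.mem_nhds hx)

theorem diffAt_h {K : Set E} (hsmooth : ContDiffOn ℝ (⊤ : ℕ∞) (hGauge K) {0}ᶜ) {x : E}
    (hx : x ≠ 0) : DifferentiableAt ℝ (hGauge K) x :=
  (contDiffAt_h hsmooth hx).differentiableAt (by simp)

theorem inner_gradient {K : Set E} (x v : E) :
    ⟪gradient (hGauge K) x, v⟫ = fderiv ℝ (hGauge K) x v := by
  unfold gradient
  rw [InnerProductSpace.toDual_symm_apply]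

theorem fderiv_h_smul {K : Set E} (hsmooth : ContDiffOn ℝ (⊤ : ℕ∞) (hGauge K) {0}ᶜ)
    {t : ℝ} (ht : 0 < t) {x : E} (hx : x ≠ 0) :
    fderiv ℝ (hGauge K) (t • x) = t • fderiv ℝ (hGauge K) x := by
  have htx : t • x ≠ 0 := smul_ne_zero ht.ne' hx
  have h1 : HasFDerivAt (fun z : E => hGauge K (t • z))
      (t • fderiv ℝ (hGauge K) (t • x)) x := by
    have hc : HasFDerivAt (fun z : E => t • z) (t • ContinuousLinearMap.id ℝ E) x :=
      (hasFDerivAt_id x).const_smul t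
    have := ((diffAt_h hsmooth htx).hasFDerivAt).comp x hc
    refine this.congr_fderiv ?_
    ext v
    simp
  have h2 : HasFDerivAt (fun z : E => t ^ 2 * hGauge K z)
      (t ^ 2 • fderiv ℝ (hGauge K) x) x :=
    ((diffAt_h hsmooth hx).hasFDerivAt).const_mul (t ^ 2)
  have heq : (fun z : E => hGauge K (t • z)) = fun z : E => t ^ 2 * hGauge K z :=
    funext fun z => hGauge_smul ht.le z
  rw [heq] at h1
  have h3 : t • fderiv ℝ (hGauge K) (t • x) = t ^ 2 • fderiv ℝ (hGauge K) x :=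
    h1.unique h2
  have h4 : t ^ 2 • fderiv ℝ (hGauge K) x = t • (t • fderiv ℝ (hGauge K) x) := by
    rw [smul_smul]; ring_nf
  rw [h4] at h3
  exact smul_right_injective _ ht.ne' h3

theorem gradient_h_smul {K : Set E} (hsmooth : ContDiffOn ℝ (⊤ : ℕ∞) (hGauge K) {0}ᶜ)
    {t : ℝ} (ht : 0 < t) {x : E} (hx : x ≠ 0) :
    gradient (hGauge K) (t • x) = t • gradient (hGauge K) x := by
  unfold gradient
  rw [fderiv_h_smul hsmooth ht hx, _root_.map_smul]

theorem euler_h {K : Set E} (hsmooth : ContDiffOn ℝ (⊤ : ℕ∞) (hGauge K) {0}ᶜ) {x : E}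
    (hx : x ≠ 0) : fderiv ℝ (hGauge K) x x = 2 * hGauge K x := by
  have hline : HasDerivAt (fun t : ℝ => t • x) x 1 := by
    simpa using (hasDerivAt_id (1:ℝ)).smul_const x
  have hd : HasDerivAt (fun t : ℝ => hGauge K (t • x)) (fderiv ℝ (hGauge K) x x) 1 := by
    have hf : HasFDerivAt (hGauge K) (fderiv ℝ (hGauge K) x) ((1:ℝ) • x) := by
      rw [one_smul]; exact (diffAt_h hsmooth hx).hasFDerivAt
    exact hf.comp_hasDerivAt 1 hline
  have hd2 : HasDerivAt (fun t : ℝ => t ^ 2 * hGauge K x) (2 * hGauge K x) 1 := by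
    simpa using (hasDerivAt_pow 2 (1:ℝ)).mul_const (hGauge K x)
  have heq : (fun t : ℝ => hGauge K (t • x)) =ᶠ[𝓝 (1:ℝ)] fun t : ℝ => t ^ 2 * hGauge K x := by
    filter_upwards [eventually_gt_nhds (by norm_num : (0:ℝ) < 1)] with t ht
    exact hGauge_smul ht.le x
  exact (hd.congr_of_eventuallyEq heq.symm).unique hd2

theorem euler_gradient {K : Set E} (hsmooth : ContDiffOn ℝ (⊤ : ℕ∞) (hGauge K) {0}ᶜ) {x : E}
    (hx : x ≠ 0) : ⟪gradient (hGauge K) x, x⟫ = 2 * hGauge K x := by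
  rw [inner_gradient, euler_h hsmooth hx]

theorem contDiffOn_fderiv_h {K : Set E} (hsmooth : ContDiffOn ℝ (⊤ : ℕ∞) (hGauge K) {0}ᶜ) :
    ContDiffOn ℝ (⊤ : ℕ∞) (fderiv ℝ (hGauge K)) ({0}ᶜ : Set E) := by
  have := hsmooth.fderiv_of_isOpen (𝕜 := ℝ) isOpen_compl_singleton
    (m := (⊤ : ℕ∞)) (by exact_mod_cast le_top)
  exact this

theorem hasFDerivAt_fderiv_h {K : Set E} (hsmooth : ContDiffOn ℝ (⊤ : ℕ∞) (hGauge K) {0}ᶜ)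
    {x : E} (hx : x ≠ 0) :
    HasFDerivAt (fderiv ℝ (hGauge K)) (fderiv ℝ (fderiv ℝ (hGauge K)) x) x := by
  have h1 : ContDiffAt ℝ (⊤ : ℕ∞) (fderiv ℝ (hGauge K)) x :=
    (contDiffOn_fderiv_h hsmooth).contDiffAt (isOpen_compl_singleton.mem_nhds hx)
  exact (h1.differentiableAt (by simp)).hasFDerivAt

theorem snd_fderiv_smul {K : Set E} (hsmooth : ContDiffOn ℝ (⊤ : ℕ∞) (hGauge K) {0}ᶜ)
    {t : ℝ} (ht : 0 < t) {x : E} (hx : x ≠ 0) :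
    fderiv ℝ (fderiv ℝ (hGauge K)) (t • x) = fderiv ℝ (fderiv ℝ (hGauge K)) x := by
  have htx : t • x ≠ 0 := smul_ne_zero ht.ne' hx
  have hc : HasFDerivAt (fun z : E => t • z) (t • ContinuousLinearMap.id ℝ E) x :=
    (hasFDerivAt_id x).const_smul t
  have h1 : HasFDerivAt (fun z : E => fderiv ℝ (hGauge K) (t • z))
      (t • fderiv ℝ (fderiv ℝ (hGauge K)) (t • x)) x := by
    have := (hasFDerivAt_fderiv_h hsmooth htx).comp x hc
    refine this.congr_fderiv ?_
    ext v w
    simp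
  have h2 : HasFDerivAt (fun z : E => t • fderiv ℝ (hGauge K) z)
      (t • fderiv ℝ (fderiv ℝ (hGauge K)) x) x :=
    (hasFDerivAt_fderiv_h hsmooth hx).const_smul t
  have heq : (fun z : E => fderiv ℝ (hGauge K) (t • z)) =ᶠ[𝓝 x]
      fun z : E => t • fderiv ℝ (hGauge K) z := by
    filter_upwards [isOpen_compl_singleton.mem_nhds hx] with z hz
    exact fderiv_h_smul hsmooth ht hz
  have h3 := (h1.congr_of_eventuallyEq heq.symm).unique h2
  exact smul_right_injective _ ht.ne' h3

theorem hess_pos {K : Set E} (hsmooth : ContDiffOn ℝ (⊤ : ℕ∞) (hGauge K) {0}ᶜ)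
    (hhess : ∀ x : E, ‖x‖ = 1 → ∀ v : E, v ≠ 0 →
      0 < fderiv ℝ (fderiv ℝ (hGauge K)) x v v)
    {x : E} (hx : x ≠ 0) {v : E} (hv : v ≠ 0) :
    0 < fderiv ℝ (fderiv ℝ (hGauge K)) x v v := by
  set u : E := ‖x‖⁻¹ • x with hu
  have hn : (0:ℝ) < ‖x‖ := norm_pos_iff.2 hx
  have hu1 : ‖u‖ = 1 := by
    rw [hu, norm_smul, norm_inv, norm_norm, inv_mul_cancel₀ hn.ne']
  have hu0 : u ≠ 0 := by
    intro h; rw [h, norm_zero] at hu1; norm_num at hu1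
  have hxu : x = ‖x‖ • u := by
    rw [hu, smul_smul, mul_inv_cancel₀ hn.ne', one_smul]
  rw [hxu, snd_fderiv_smul hsmooth hn hu0]
  exact hhess u hu1 v hv

theorem hess_symm {K : Set E} (hsmooth : ContDiffOn ℝ (⊤ : ℕ∞) (hGauge K) {0}ᶜ)
    {x : E} (hx : x ≠ 0) (v w : E) :
    fderiv ℝ (fderiv ℝ (hGauge K)) x v w = fderiv ℝ (fderiv ℝ (hGauge K)) x w v := by
  apply second_derivative_symmetric_of_eventually (f := hGauge K)
    (f' := fderiv ℝ (hGauge K)) (x := x)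
  · filter_upwards [isOpen_compl_singleton.mem_nhds hx] with z hz
    exact (diffAt_h hsmooth hz).hasFDerivAt
  · exact hasFDerivAt_fderiv_h hsmooth hx


-- part 4 : boundary behavior and injectivity
theorem fderiv_le_on_K {K : Set E} (hKcomp : IsCompact K) (hKconv : Convex ℝ K)
    (hK0 : 0 ∈ interior K) (hsmooth : ContDiffOn ℝ (⊤ : ℕ∞) (hGauge K) {0}ᶜ)
    {x z : E} (hxf : x ∈ frontier K) (hz : z ∈ K) :
    fderiv ℝ (hGauge K) x z ≤ 1 := by
  have hx0 : x ≠ 0 := frontier_ne_zero hKconv hK0 hxf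
  have hxK : x ∈ K := hKcomp.isClosed.frontier_subset hxf
  have hg1 : gauge K x = 1 := (frontier_iff hKconv hK0).1 hxf
  have hhx : hGauge K x = 1 / 2 := by unfold hGauge; rw [hg1]; norm_num
  set w : E := z - x with hw
  set ψ : ℝ → ℝ := fun t => hGauge K (x + t • w) with hψ
  have hline : HasDerivAt (fun t : ℝ => x + t • w) w 0 := by
    simpa using (((hasDerivAt_id (0:ℝ)).smul_const w).const_add x)
  have hd : HasDerivAt ψ (fderiv ℝ (hGauge K) x w) 0 := by
    have hf : HasFDerivAt (hGauge K) (fderiv ℝ (hGauge K) x) (x + (0:ℝ) • w) := by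
      simpa using (diffAt_h hsmooth hx0).hasFDerivAt
    exact hf.comp_hasDerivAt 0 hline
  have hslope : Tendsto (slope ψ 0) (𝓝[>] (0:ℝ)) (𝓝 (fderiv ℝ (hGauge K) x w)) :=
    (hasDerivAt_iff_tendsto_slope.1 hd).mono_left
      (nhdsWithin_mono 0 (fun t ht => ne_of_gt ht))
  have hle : ∀ᶠ t in 𝓝[>] (0:ℝ), slope ψ 0 t ≤ 0 := by
    filter_upwards [Ioc_mem_nhdsGT_of_mem (Set.left_mem_Ico.2 one_pos)] with t ht
    have hmem : x + t • w ∈ K := by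
      have : x + t • w = (1 - t) • x + t • z := by
        rw [hw]; module
      rw [this]
      exact hKconv hxK hz (by linarith [ht.2]) ht.1.le (by ring)
    have hψt : ψ t ≤ 1 / 2 := by
      have hg : gauge K (x + t • w) ≤ 1 := gauge_le_one_of_mem hmem
      have hg0 : 0 ≤ gauge K (x + t • w) := gauge_nonneg _
      simp only [hψ, hGauge]
      nlinarith
    have hψ0 : ψ 0 = 1 / 2 := by simp [hψ, hhx]
    rw [slope_def_field]
    rw [div_eq_mul_inv]  -- (ψ t - ψ 0) * (t - 0)⁻¹
    apply mul_nonpos_of_nonpos_of_nonneg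
    · rw [hψ0]; linarith
    · simp [inv_nonneg]; exact ht.1.le
  have hw0 : fderiv ℝ (hGauge K) x w ≤ 0 := le_of_tendsto hslope hle
  have hxx : fderiv ℝ (hGauge K) x x = 1 := by
    rw [euler_h hsmooth hx0, hhx]; norm_num
  have : fderiv ℝ (hGauge K) x z = fderiv ℝ (hGauge K) x w + fderiv ℝ (hGauge K) x x := by
    rw [← map_add]; congr 1; rw [hw]; abel
  rw [this, hxx]; linarith

theorem grad_mem_polar {K : Set E} (hKcomp : IsCompact K) (hKconv : Convex ℝ K)
    (hK0 : 0 ∈ interior K) (hsmooth : ContDiffOn ℝ (⊤ : ℕ∞) (hGauge K) {0}ᶜ)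
    {x : E} (hxf : x ∈ frontier K) : gradient (hGauge K) x ∈ polarBodyN K := by
  intro z hz
  rw [real_inner_comm, inner_gradient]
  exact fderiv_le_on_K hKcomp hKconv hK0 hsmooth hxf hz

theorem inner_grad_boundary {K : Set E} (hKconv : Convex ℝ K) (hK0 : 0 ∈ interior K)
    (hsmooth : ContDiffOn ℝ (⊤ : ℕ∞) (hGauge K) {0}ᶜ)
    {x : E} (hxf : x ∈ frontier K) : ⟪x, gradient (hGauge K) x⟫ = 1 := by
  have hx0 : x ≠ 0 := frontier_ne_zero hKconv hK0 hxf
  have hg1 : gauge K x = 1 := (frontier_iff hKconv hK0).1 hxf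
  rw [real_inner_comm, euler_gradient hsmooth hx0]
  unfold hGauge; rw [hg1]; norm_num

theorem grad_mem_frontier_polar {K : Set E} (hKcomp : IsCompact K) (hKconv : Convex ℝ K)
    (hK0 : 0 ∈ interior K) (hsmooth : ContDiffOn ℝ (⊤ : ℕ∞) (hGauge K) {0}ᶜ)
    {x : E} (hxf : x ∈ frontier K) :
    gradient (hGauge K) x ∈ frontier (polarBodyN K) :=
  mem_frontier_polar_of_inner_eq_one hKcomp (hKcomp.isClosed.frontier_subset hxf)
    (grad_mem_polar hKcomp hKconv hK0 hsmooth hxf)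
    (inner_grad_boundary hKconv hK0 hsmooth hxf)

theorem gradient_eq_of_inner_one {K : Set E} (hKcomp : IsCompact K) (hKconv : Convex ℝ K)
    (hK0 : 0 ∈ interior K) (hsmooth : ContDiffOn ℝ (⊤ : ℕ∞) (hGauge K) {0}ᶜ)
    {x y : E} (hy : y ∈ polarBodyN K) (hx1 : gauge K x = 1) (hxy : ⟪x, y⟫ = 1) :
    gradient (hGauge K) x = y := by
  have hx0 : x ≠ 0 := by
    intro h; rw [h, gauge_zero] at hx1; norm_num at hx1
  set φ : E → ℝ := fun z => hGauge K z - ⟪z, y⟫ with hφ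
  have hmin : ∀ z, φ x ≤ φ z := by
    intro z
    have h1 : ⟪z, y⟫ ≤ gauge K z := inner_le_gauge hK0 hy
    have h2 : 0 ≤ (gauge K z - 1) ^ 2 := sq_nonneg _
    simp only [hφ, hGauge, hx1, hxy]
    nlinarith
  have hloc : IsLocalMin φ x := Filter.Eventually.of_forall hmin
  have hdφ : HasFDerivAt φ (fderiv ℝ (hGauge K) x - innerSL ℝ y) x := by
    apply HasFDerivAt.sub (diffAt_h hsmooth hx0).hasFDerivAt
    have heq : (fun z : E => ⟪z, y⟫) = fun z : E => (innerSL ℝ y) z := by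
      funext z; rw [innerSL_apply_apply, real_inner_comm]
    rw [heq]
    exact (innerSL ℝ y).hasFDerivAt
  have h0 := hloc.hasFDerivAt_eq_zero hdφ
  have hfe : fderiv ℝ (hGauge K) x = innerSL ℝ y := by rwa [sub_eq_zero] at h0
  apply ext_inner_right ℝ
  intro v
  rw [inner_gradient, hfe, innerSL_apply_apply]

theorem gradient_ne_of_opposite {K : Set E} (hKcomp : IsCompact K) (hK0 : 0 ∈ interior K)
    (hsmooth : ContDiffOn ℝ (⊤ : ℕ∞) (hGauge K) {0}ᶜ)
    {a : E} (ha : a ≠ 0) {s : ℝ} (hs : 0 < s) :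
    gradient (hGauge K) a ≠ gradient (hGauge K) (s • (-a)) := by
  intro h
  have hpos : 0 < hGauge K a := by
    have := gauge_pos' hKcomp hK0 ha
    unfold hGauge; positivity
  have hneg : 0 < hGauge K (-a) := by
    have := gauge_pos' hKcomp hK0 (neg_ne_zero.2 ha)
    unfold hGauge; positivity
  have h1 : ⟪gradient (hGauge K) a, a⟫ = 2 * hGauge K a := euler_gradient hsmooth ha
  have h2 : ⟪gradient (hGauge K) (s • (-a)), a⟫ = -(s * (2 * hGauge K (-a))) := by
    rw [gradient_h_smul hsmooth hs (neg_ne_zero.2 ha), real_inner_smul_left]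
    have := euler_gradient hsmooth (neg_ne_zero.2 ha)
    have h3 : ⟪gradient (hGauge K) (-a), a⟫ = -⟪gradient (hGauge K) (-a), -a⟫ := by
      rw [inner_neg_right, neg_neg]
    rw [h3, this]; ring
  rw [h] at h1
  rw [h1] at h2
  nlinarith

theorem gradient_injOn {K : Set E} (hKcomp : IsCompact K) (hK0 : 0 ∈ interior K)
    (hsmooth : ContDiffOn ℝ (⊤ : ℕ∞) (hGauge K) {0}ᶜ)
    (hhess : ∀ x : E, ‖x‖ = 1 → ∀ v : E, v ≠ 0 →
      0 < fderiv ℝ (fderiv ℝ (hGauge K)) x v v)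
    {a b : E} (ha : a ≠ 0) (hb : b ≠ 0)
    (hab : gradient (hGauge K) a = gradient (hGauge K) b) : a = b := by
  by_contra hne
  by_cases hseg : (0 : E) ∈ segment ℝ a b
  · -- b is a negative multiple of a
    rw [segment_eq_image'] at hseg
    obtain ⟨t, hts, h0⟩ := hseg
    have h0' : a + t • (b - a) = 0 := h0
    have ht0 : t ≠ 0 := by
      intro h; rw [h] at h0'; simp at h0'; exact ha h0'
    have ht1 : t ≠ 1 := by
      intro h; rw [h] at h0'; simp at h0'; exact hb h0' 
    have htpos : 0 < t := lt_of_le_of_ne hts.1 (Ne.symm ht0)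
    have htlt : t < 1 := lt_of_le_of_ne hts.2 ht1
    -- 0 = a + t(b-a) → b = ((t-1)/t) • a = (- (1-t)/t) • a
    have hbeq : b = ((1 - t) / t) • (-a) := by
      have h1 : t • b = (t - 1) • a := by linear_combination (norm := module) h0' 
      have h2 : b = t⁻¹ • ((t - 1) • a) := by
        rw [← h1, smul_smul, inv_mul_cancel₀ ht0, one_smul]
      rw [h2, smul_smul, smul_neg, ← neg_smul]
      congr 1
      field_simp
      ring
    rw [hbeq] at hab
    exact gradient_ne_of_opposite hKcomp hK0 hsmooth ha (div_pos (by linarith) htpos) hab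
  · -- segment avoids zero: strict monotonicity
    set w : E := b - a with hw
    have hw0 : w ≠ 0 := sub_ne_zero.2 (Ne.symm hne)
    set γ : ℝ → E := fun t => a + t • w with hγ
    have hγmem : ∀ t ∈ Icc (0:ℝ) 1, γ t ≠ 0 := by
      intro t ht h0
      apply hseg
      rw [segment_eq_image']
      exact ⟨t, ht, h0⟩
    set F : ℝ → ℝ := fun t => fderiv ℝ (hGauge K) (γ t) w with hF
    have hγcont : Continuous γ := by
      apply continuous_const.add (continuous_id.smul continuous_const)
    have hFcont : ContinuousOn F (Icc 0 1) := by
      apply ContinuousOn.congr (f := fun t => (ContinuousLinearMap.apply ℝ ℝ w)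
        ((fderiv ℝ (hGauge K)) (γ t)))
      · apply (ContinuousLinearMap.apply ℝ ℝ w).continuous.comp_continuousOn
        apply ((contDiffOn_fderiv_h hsmooth).continuousOn).comp hγcont.continuousOn
        intro t ht
        exact hγmem t ht
      · intro t ht; rfl
    have hFderiv : ∀ t ∈ Ioo (0:ℝ) 1, HasDerivAt F
        (fderiv ℝ (fderiv ℝ (hGauge K)) (γ t) w w) t := by
      intro t ht
      have hγt : γ t ≠ 0 := hγmem t (Ioo_subset_Icc_self ht)
      have hline : HasDerivAt γ w t := by
        simpa [hγ] using (((hasDerivAt_id t).smul_const w).const_add a)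
      have hcomp : HasDerivAt (fun s => fderiv ℝ (hGauge K) (γ s))
          (fderiv ℝ (fderiv ℝ (hGauge K)) (γ t) w) t :=
        (hasFDerivAt_fderiv_h hsmooth hγt).comp_hasDerivAt t hline
      have := (ContinuousLinearMap.apply ℝ ℝ w).hasFDerivAt.comp_hasDerivAt t hcomp
      exact this
    have hmono : StrictMonoOn F (Icc 0 1) := by
      apply strictMonoOn_of_deriv_pos (convex_Icc 0 1) hFcont
      intro t ht
      rw [interior_Icc] at ht
      rw [(hFderiv t ht).deriv]
      exact hess_pos hsmooth hhess (hγmem t (Ioo_subset_Icc_self ht)) hw0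
    have hlt : F 0 < F 1 := hmono (Set.left_mem_Icc.2 zero_le_one)
      (Set.right_mem_Icc.2 zero_le_one) one_pos
    have hF0 : F 0 = ⟪gradient (hGauge K) a, w⟫ := by
      simp only [hF, hγ, zero_smul, add_zero, inner_gradient]
    have hF1 : F 1 = ⟪gradient (hGauge K) b, w⟫ := by
      have : γ 1 = b := by simp [hγ, hw]
      simp only [hF, this, inner_gradient]
    rw [hF0, hF1, hab] at hlt
    exact lt_irrefl _ hlt


-- part 5 : bijection pieces
theorem polar_frontier_ne_zero {K : Set E} (hKcomp : IsCompact K) {y : E}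
    (hy : y ∈ frontier (polarBodyN K)) : y ≠ 0 := by
  intro h
  have := (polar_frontier_iff hKcomp).1 hy
  rw [h, gauge_zero] at this
  norm_num at this

theorem scale_to_frontier {K : Set E} (hKcomp : IsCompact K) (hKconv : Convex ℝ K)
    (hK0 : 0 ∈ interior K) {x : E} (hx : x ≠ 0) :
    (gauge K x)⁻¹ • x ∈ frontier K := by
  have hg : 0 < gauge K x := gauge_pos' hKcomp hK0 hx
  rw [frontier_iff hKconv hK0, gauge_smul_of_nonneg (inv_nonneg.2 hg.le), smul_eq_mul,
    inv_mul_cancel₀ hg.ne']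

theorem grad_frontier_surj {K : Set E} (hKcomp : IsCompact K) (hKconv : Convex ℝ K)
    (hK0 : 0 ∈ interior K) (hsmooth : ContDiffOn ℝ (⊤ : ℕ∞) (hGauge K) {0}ᶜ)
    {y : E} (hy : y ∈ frontier (polarBodyN K)) :
    ∃ x : E, x ∈ frontier K ∧ ⟪x, y⟫ = 1 ∧ gradient (hGauge K) x = y := by
  obtain ⟨x, hxf, hxy⟩ := exists_inner_eq_one hKcomp hKconv hK0 hy
  refine ⟨x, hxf, hxy, ?_⟩
  exact gradient_eq_of_inner_one hKcomp hKconv hK0 hsmooth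
    ((polar_isClosed K).frontier_subset hy) ((frontier_iff hKconv hK0).1 hxf) hxy

theorem grad_decomp {K : Set E} (hKcomp : IsCompact K) (hKconv : Convex ℝ K)
    (hK0 : 0 ∈ interior K) (hsmooth : ContDiffOn ℝ (⊤ : ℕ∞) (hGauge K) {0}ᶜ)
    {x : E} (hx : x ≠ 0) :
    gradient (hGauge K) x = gauge K x • gradient (hGauge K) ((gauge K x)⁻¹ • x) := by
  have hg : 0 < gauge K x := gauge_pos' hKcomp hK0 hx
  have hu : (gauge K x)⁻¹ • x ≠ 0 := smul_ne_zero (inv_ne_zero hg.ne') hx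
  have hxu : x = gauge K x • ((gauge K x)⁻¹ • x) := by
    rw [smul_smul, mul_inv_cancel₀ hg.ne', one_smul]
  conv_lhs => rw [hxu]
  exact gradient_h_smul hsmooth hg hu

theorem grad_ne_zero {K : Set E} (hKcomp : IsCompact K) (hKconv : Convex ℝ K)
    (hK0 : 0 ∈ interior K) (hsmooth : ContDiffOn ℝ (⊤ : ℕ∞) (hGauge K) {0}ᶜ)
    {x : E} (hx : x ≠ 0) : gradient (hGauge K) x ≠ 0 := by
  have hg : 0 < gauge K x := gauge_pos' hKcomp hK0 hx
  rw [grad_decomp hKcomp hKconv hK0 hsmooth hx]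
  apply smul_ne_zero hg.ne'
  exact polar_frontier_ne_zero hKcomp
    (grad_mem_frontier_polar hKcomp hKconv hK0 hsmooth (scale_to_frontier hKcomp hKconv hK0 hx))

theorem grad_surj_nonzero {K : Set E} (hKcomp : IsCompact K) (hKconv : Convex ℝ K)
    (hK0 : 0 ∈ interior K) (hsmooth : ContDiffOn ℝ (⊤ : ℕ∞) (hGauge K) {0}ᶜ)
    {y : E} (hy : y ≠ 0) : ∃ x : E, x ≠ 0 ∧ gradient (hGauge K) x = y := by
  have ht : 0 < gauge (polarBodyN K) y := polar_gauge_pos hKcomp hK0 hy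
  set t := gauge (polarBodyN K) y with htd
  set w : E := t⁻¹ • y with hwd
  have hwf : w ∈ frontier (polarBodyN K) := by
    rw [polar_frontier_iff hKcomp, hwd, gauge_smul_of_nonneg (inv_nonneg.2 ht.le), smul_eq_mul,
      ← htd, inv_mul_cancel₀ ht.ne']
  obtain ⟨x, hxf, _, hgx⟩ := grad_frontier_surj hKcomp hKconv hK0 hsmooth hwf
  have hx0 : x ≠ 0 := frontier_ne_zero hKconv hK0 hxf
  refine ⟨t • x, smul_ne_zero ht.ne' hx0, ?_⟩
  rw [gradient_h_smul hsmooth ht hx0, hgx, hwd, smul_smul, mul_inv_cancel₀ ht.ne', one_smul]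

theorem gauge_polar_grad {K : Set E} (hKcomp : IsCompact K) (hKconv : Convex ℝ K)
    (hK0 : 0 ∈ interior K) (hsmooth : ContDiffOn ℝ (⊤ : ℕ∞) (hGauge K) {0}ᶜ)
    {x : E} (hx : x ≠ 0) :
    gauge (polarBodyN K) (gradient (hGauge K) x) = gauge K x := by
  have hg : 0 < gauge K x := gauge_pos' hKcomp hK0 hx
  rw [grad_decomp hKcomp hKconv hK0 hsmooth hx,
    gauge_smul_of_nonneg hg.le, smul_eq_mul]
  have h1 : gauge (polarBodyN K) (gradient (hGauge K) ((gauge K x)⁻¹ • x)) = 1 :=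
    (polar_frontier_iff hKcomp).1
      (grad_mem_frontier_polar hKcomp hKconv hK0 hsmooth (scale_to_frontier hKcomp hKconv hK0 hx))
  rw [h1, mul_one]

theorem hGauge_polar_grad {K : Set E} (hKcomp : IsCompact K) (hKconv : Convex ℝ K)
    (hK0 : 0 ∈ interior K) (hsmooth : ContDiffOn ℝ (⊤ : ℕ∞) (hGauge K) {0}ᶜ)
    {x : E} (hx : x ≠ 0) :
    hGauge (polarBodyN K) (gradient (hGauge K) x) = hGauge K x := by
  show gauge (polarBodyN K) (gradient (hGauge K) x) ^ 2 / 2 = gauge K x ^ 2 / 2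
  rw [gauge_polar_grad hKcomp hKconv hK0 hsmooth hx]


-- part 6 : inverse function theorem package
/-- The inverse of the Riesz isomorphism, as a continuous linear equivalence. -/
def dualCLE (n : ℕ) : (EuclideanSpace ℝ (Fin n) →L[ℝ] ℝ) ≃L[ℝ] EuclideanSpace ℝ (Fin n) :=
  (InnerProductSpace.toDual ℝ (EuclideanSpace ℝ (Fin n))).symm.toContinuousLinearEquiv

theorem dualCLE_apply (L : EuclideanSpace ℝ (Fin n) →L[ℝ] ℝ) :
    dualCLE n L = (InnerProductSpace.toDual ℝ (EuclideanSpace ℝ (Fin n))).symm L := by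
  simp [dualCLE]

theorem euler_snd {K : Set E} (hsmooth : ContDiffOn ℝ (⊤ : ℕ∞) (hGauge K) {0}ᶜ) {x : E}
    (hx : x ≠ 0) :
    fderiv ℝ (fderiv ℝ (hGauge K)) x x = fderiv ℝ (hGauge K) x := by
  have hline : HasDerivAt (fun t : ℝ => t • x) x 1 := by
    simpa using (hasDerivAt_id (1:ℝ)).smul_const x
  have h1 : HasDerivAt (fun t : ℝ => fderiv ℝ (hGauge K) (t • x))
      (fderiv ℝ (fderiv ℝ (hGauge K)) x x) 1 := by
    have hf : HasFDerivAt (fderiv ℝ (hGauge K)) (fderiv ℝ (fderiv ℝ (hGauge K)) x)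
        ((1:ℝ) • x) := by
      rw [one_smul]; exact hasFDerivAt_fderiv_h hsmooth hx
    exact hf.comp_hasDerivAt 1 hline
  have h2 : HasDerivAt (fun t : ℝ => t • fderiv ℝ (hGauge K) x)
      (fderiv ℝ (hGauge K) x) 1 := by
    simpa using (hasDerivAt_id (1:ℝ)).smul_const (fderiv ℝ (hGauge K) x)
  have heq : (fun t : ℝ => fderiv ℝ (hGauge K) (t • x)) =ᶠ[𝓝 (1:ℝ)]
      fun t : ℝ => t • fderiv ℝ (hGauge K) x := by
    filter_upwards [eventually_gt_nhds (by norm_num : (0:ℝ) < 1)] with t ht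
    exact fderiv_h_smul hsmooth ht hx
  exact (h1.congr_of_eventuallyEq heq.symm).unique h2

theorem contDiffAt_grad {K : Set E} (hsmooth : ContDiffOn ℝ (⊤ : ℕ∞) (hGauge K) {0}ᶜ)
    {x : E} (hx : x ≠ 0) : ContDiffAt ℝ (⊤ : ℕ∞) (gradient (hGauge K)) x := by
  have h1 : ContDiffAt ℝ (⊤ : ℕ∞) (fderiv ℝ (hGauge K)) x :=
    (contDiffOn_fderiv_h hsmooth).contDiffAt (isOpen_compl_singleton.mem_nhds hx)
  have h2 := ContDiff.comp_contDiffAt x (((dualCLE n).toContinuousLinearMap).contDiff) h1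
  exact h2.congr_of_eventuallyEq (Filter.Eventually.of_forall fun z => by
    simp only [Function.comp_apply, ContinuousLinearEquiv.coe_coe, dualCLE_apply]
    rfl)

theorem local_inv_package {K : Set E} (hKcomp : IsCompact K) (hKconv : Convex ℝ K)
    (hK0 : 0 ∈ interior K) (hsmooth : ContDiffOn ℝ (⊤ : ℕ∞) (hGauge K) {0}ᶜ)
    (hhess : ∀ x : E, ‖x‖ = 1 → ∀ v : E, v ≠ 0 →
      0 < fderiv ℝ (fderiv ℝ (hGauge K)) x v v)
    {x₀ : E} (hx₀ : x₀ ≠ 0) :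
    ∃ (g : E → E) (A' : E →L[ℝ] E),
      ContDiffAt ℝ (⊤ : ℕ∞) g (gradient (hGauge K) x₀) ∧
      g (gradient (hGauge K) x₀) = x₀ ∧
      (∀ᶠ y in 𝓝 (gradient (hGauge K) x₀), g y ≠ 0 ∧ gradient (hGauge K) (g y) = y) ∧
      HasFDerivAt g A' (gradient (hGauge K) x₀) ∧
      (∀ v : E, v ≠ 0 → 0 < ⟪A' v, v⟫) ∧
      (∀ v : E, ⟪gradient (hGauge K) x₀, A' v⟫ = ⟪x₀, v⟫) := by
  classical
  set A2 := fderiv ℝ (fderiv ℝ (hGauge K)) x₀ with hA2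
  set T : (E →L[ℝ] ℝ) →L[ℝ] E := (dualCLE n : (E →L[ℝ] ℝ) →L[ℝ] E) with hT
  set Hop : E →L[ℝ] E := T.comp A2 with hHop
  have hHop_inner : ∀ v w : E, ⟪Hop v, w⟫ = A2 v w := by
    intro v w
    show ⟪T (A2 v), w⟫ = A2 v w
    rw [hT]
    show ⟪dualCLE n (A2 v), w⟫ = A2 v w
    rw [dualCLE_apply]
    exact InnerProductSpace.toDual_symm_apply
  have hinj : Function.Injective ⇑Hop := by
    intro u v huv
    by_contra hne
    have huv0 : u - v ≠ 0 := sub_ne_zero.2 hne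
    have hz : Hop (u - v) = 0 := by rw [map_sub, huv, sub_self]
    have hpos : 0 < A2 (u - v) (u - v) := hess_pos hsmooth hhess hx₀ huv0
    rw [← hHop_inner] at hpos
    rw [hz] at hpos
    simp at hpos
  have hsurj : Function.Surjective ⇑Hop := by
    have h := (LinearMap.injective_iff_surjective
      (f := (Hop : E →ₗ[ℝ] E))).1 hinj
    exact h
  have hbij : Function.Bijective ⇑Hop := ⟨hinj, hsurj⟩
  set eqA := (LinearEquiv.ofBijective (Hop : E →ₗ[ℝ] E) hbij).toContinuousLinearEquiv with heqAd
  have heqA : ∀ v, eqA v = Hop v := fun v => rfl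
  have heqACLM : (↑eqA : E →L[ℝ] E) = Hop := by
    apply ContinuousLinearMap.ext
    intro v
    exact heqA v
  -- derivative of the gradient map
  have hfd : HasFDerivAt (gradient (hGauge K)) (↑eqA : E →L[ℝ] E) x₀ := by
    rw [heqACLM]
    have h1 := hasFDerivAt_fderiv_h hsmooth hx₀
    have h2 := T.hasFDerivAt (x := fderiv ℝ (hGauge K) x₀)
    have h3 := h2.comp x₀ h1
    apply h3.congr_of_eventuallyEq
    apply Filter.Eventually.of_forall
    intro z
    show gradient (hGauge K) z = T (fderiv ℝ (hGauge K) z)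
    rw [hT]
    show gradient (hGauge K) z = dualCLE n (fderiv ℝ (hGauge K) z)
    rw [dualCLE_apply]
    rfl
  have hcd : ContDiffAt ℝ (⊤ : ℕ∞) (gradient (hGauge K)) x₀ := contDiffAt_grad hsmooth hx₀
  have hn1 : ((⊤ : ℕ∞) : WithTop ℕ∞) ≠ 0 := by simp
  have hstrict : HasStrictFDerivAt (gradient (hGauge K)) (↑eqA : E →L[ℝ] E) x₀ :=
    hcd.hasStrictFDerivAt' hfd hn1
  refine ⟨hstrict.localInverse (gradient (hGauge K)) eqA x₀, (eqA.symm : E →L[ℝ] E),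
    ?_, ?_, ?_, ?_, ?_, ?_⟩
  · exact hcd.to_localInverse hfd hn1
  · exact hstrict.localInverse_apply_image
  · have hev1 := hstrict.eventually_right_inverse
    have hgc : ContinuousAt (hstrict.localInverse (gradient (hGauge K)) eqA x₀)
        (gradient (hGauge K) x₀) := hstrict.localInverse_continuousAt
    have hgx : hstrict.localInverse (gradient (hGauge K)) eqA x₀ (gradient (hGauge K) x₀)
        = x₀ := hstrict.localInverse_apply_image
    have hev2 := hgc.eventually_ne (by rw [hgx]; exact hx₀)
    filter_upwards [hev1, hev2] with y h1 h2
    exact ⟨h2, h1⟩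
  · exact hstrict.to_localInverse.hasFDerivAt
  · intro v hv
    set u : E := eqA.symm v with hu
    have hAv : (eqA.symm : E →L[ℝ] E) v = u := rfl
    have hu0 : u ≠ 0 := by
      intro h
      apply hv
      have : eqA u = v := eqA.apply_symm_apply v
      rw [h] at this
      rw [← this]
      simp
    have hveq : v = Hop u := by rw [← heqA u, hu, eqA.apply_symm_apply]
    rw [hAv, hveq, real_inner_comm, hHop_inner]
    exact hess_pos hsmooth hhess hx₀ hu0
  · intro v
    set u : E := eqA.symm v with hu
    have hAv : (eqA.symm : E →L[ℝ] E) v = u := rfl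
    have hveq : v = Hop u := by rw [← heqA u, hu, eqA.apply_symm_apply]
    rw [hAv]
    have h1 : ⟪gradient (hGauge K) x₀, u⟫ = fderiv ℝ (hGauge K) x₀ u := inner_gradient x₀ u
    have h2 : fderiv ℝ (hGauge K) x₀ u = A2 x₀ u := by rw [hA2, euler_snd hsmooth hx₀]
    have h3 : A2 x₀ u = A2 u x₀ := hess_symm hsmooth hx₀ x₀ u
    have h4 : A2 u x₀ = ⟪Hop u, x₀⟫ := (hHop_inner u x₀).symm
    rw [h1, h2, h3, h4, ← hveq, real_inner_comm]

-- part 7 : smoothness of the polar gauge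
theorem polar_contDiffAt {K : Set E} (hKcomp : IsCompact K) (hKconv : Convex ℝ K)
    (hK0 : 0 ∈ interior K) (hsmooth : ContDiffOn ℝ (⊤ : ℕ∞) (hGauge K) {0}ᶜ)
    (hhess : ∀ x : E, ‖x‖ = 1 → ∀ v : E, v ≠ 0 →
      0 < fderiv ℝ (fderiv ℝ (hGauge K)) x v v)
    {y : E} (hy : y ≠ 0) : ContDiffAt ℝ (⊤ : ℕ∞) (hGauge (polarBodyN K)) y := by
  obtain ⟨x₀, hx₀, rfl⟩ := grad_surj_nonzero hKcomp hKconv hK0 hsmooth hy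
  obtain ⟨g, A', hgcd, hgx, hev, hgd, hpos, hdual⟩ :=
    local_inv_package hKcomp hKconv hK0 hsmooth hhess hx₀
  have hev2 : hGauge (polarBodyN K) =ᶠ[𝓝 (gradient (hGauge K) x₀)]
      fun y => hGauge K (g y) := by
    filter_upwards [hev] with y hy1
    conv_lhs => rw [← hy1.2]
    exact hGauge_polar_grad hKcomp hKconv hK0 hsmooth hy1.1
  have hout : ContDiffAt ℝ (⊤ : ℕ∞) (hGauge K) (g (gradient (hGauge K) x₀)) := by
    rw [hgx]; exact contDiffAt_h hsmooth hx₀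
  exact (ContDiffAt.comp _ hout hgcd).congr_of_eventuallyEq hev2

theorem polar_fderiv_eq {K : Set E} (hKcomp : IsCompact K) (hKconv : Convex ℝ K)
    (hK0 : 0 ∈ interior K) (hsmooth : ContDiffOn ℝ (⊤ : ℕ∞) (hGauge K) {0}ᶜ)
    (hhess : ∀ x : E, ‖x‖ = 1 → ∀ v : E, v ≠ 0 →
      0 < fderiv ℝ (fderiv ℝ (hGauge K)) x v v)
    {x₀ : E} (hx₀ : x₀ ≠ 0) :
    fderiv ℝ (hGauge (polarBodyN K)) (gradient (hGauge K) x₀) = innerSL ℝ x₀ := by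
  obtain ⟨g, A', hgcd, hgx, hev, hgd, hpos, hdual⟩ :=
    local_inv_package hKcomp hKconv hK0 hsmooth hhess hx₀
  have hev2 : hGauge (polarBodyN K) =ᶠ[𝓝 (gradient (hGauge K) x₀)]
      fun y => hGauge K (g y) := by
    filter_upwards [hev] with y hy1
    conv_lhs => rw [← hy1.2]
    exact hGauge_polar_grad hKcomp hKconv hK0 hsmooth hy1.1
  have hout : HasFDerivAt (hGauge K) (fderiv ℝ (hGauge K) x₀) (g (gradient (hGauge K) x₀)) := by
    rw [hgx]; exact (diffAt_h hsmooth hx₀).hasFDerivAt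
  have hd1 : HasFDerivAt (fun y => hGauge K (g y))
      ((fderiv ℝ (hGauge K) x₀).comp A') (gradient (hGauge K) x₀) := hout.comp _ hgd
  have hd2 : HasFDerivAt (hGauge (polarBodyN K))
      ((fderiv ℝ (hGauge K) x₀).comp A') (gradient (hGauge K) x₀) :=
    hd1.congr_of_eventuallyEq hev2
  rw [hd2.fderiv]
  ext v
  rw [ContinuousLinearMap.comp_apply, ← inner_gradient, innerSL_apply_apply]
  exact hdual v

theorem polar_hess_pos {K : Set E} (hKcomp : IsCompact K) (hKconv : Convex ℝ K)
    (hK0 : 0 ∈ interior K) (hsmooth : ContDiffOn ℝ (⊤ : ℕ∞) (hGauge K) {0}ᶜ)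
    (hhess : ∀ x : E, ‖x‖ = 1 → ∀ v : E, v ≠ 0 →
      0 < fderiv ℝ (fderiv ℝ (hGauge K)) x v v)
    {y : E} (hy : y ≠ 0) {v : E} (hv : v ≠ 0) :
    0 < fderiv ℝ (fderiv ℝ (hGauge (polarBodyN K))) y v v := by
  obtain ⟨x₀, hx₀, rfl⟩ := grad_surj_nonzero hKcomp hKconv hK0 hsmooth hy
  obtain ⟨g, A', hgcd, hgx, hev, hgd, hpos, hdual⟩ :=
    local_inv_package hKcomp hKconv hK0 hsmooth hhess hx₀
  have hev3 : fderiv ℝ (hGauge (polarBodyN K)) =ᶠ[𝓝 (gradient (hGauge K) x₀)]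
      fun y => innerSL ℝ (g y) := by
    filter_upwards [hev] with y hy1
    conv_lhs => rw [← hy1.2]
    exact polar_fderiv_eq hKcomp hKconv hK0 hsmooth hhess hy1.1
  have hd : HasFDerivAt (fun y => innerSL ℝ (g y))
      ((innerSL ℝ : E →L[ℝ] (E →L[ℝ] ℝ)).comp A') (gradient (hGauge K) x₀) :=
    (innerSL ℝ : E →L[ℝ] (E →L[ℝ] ℝ)).hasFDerivAt.comp _ hgd
  have heq : fderiv ℝ (fderiv ℝ (hGauge (polarBodyN K))) (gradient (hGauge K) x₀)
      = (innerSL ℝ : E →L[ℝ] (E →L[ℝ] ℝ)).comp A' := by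
    rw [hev3.fderiv_eq]
    exact hd.fderiv
  rw [heq, ContinuousLinearMap.comp_apply, innerSL_apply_apply]
  exact hpos v hv


end SCBaux

open SCBaux

/-- Section 3.1: for a strongly convex body `K ⊂ ℝⁿ` with smooth boundary and `0` in its
interior, the gradient map `∇h_K` maps `∂K` bijectively onto `∂K°`; for `y ∈ ∂K°` the
unique `x ∈ ∂K` with `⟪x, y⟫ = 1` is `x = (∇h_K)⁻¹(y)`; moreover `∇h_K` is a bijection of
`ℝⁿ \ {0}` and `h_{K°} ∘ ∇h_K = h_K` there (i.e. `h_{K°}(y) = h_K((∇h_K)⁻¹(y))` for all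
`y ≠ 0`); and `h_{K°}` is `C^∞` away from the origin with positive definite Hessian on the
unit sphere, so `K°` is also strongly convex with smooth boundary. -/
theorem gradient_gauge_sq_boundary_diffeo
    {n : ℕ} (K : Set (EuclideanSpace ℝ (Fin n)))
    (hKcomp : IsCompact K) (hKconv : Convex ℝ K) (hK0 : 0 ∈ interior K)
    (hsmooth : ContDiffOn ℝ (⊤ : ℕ∞) (hGauge K) {0}ᶜ)
    (hhess : ∀ x : EuclideanSpace ℝ (Fin n), ‖x‖ = 1 →
      ∀ v : EuclideanSpace ℝ (Fin n), v ≠ 0 →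
        0 < fderiv ℝ (fderiv ℝ (hGauge K)) x v v) :
    Set.BijOn (gradient (hGauge K)) (frontier K) (frontier (polarBodyN K)) ∧
    (∀ y ∈ frontier (polarBodyN K),
      ∃! x : EuclideanSpace ℝ (Fin n), x ∈ frontier K ∧ ⟪x, y⟫ = 1) ∧
    (∀ y ∈ frontier (polarBodyN K), ∀ x ∈ frontier K, ⟪x, y⟫ = 1 →
      gradient (hGauge K) x = y) ∧
    Set.BijOn (gradient (hGauge K)) {(0 : EuclideanSpace ℝ (Fin n))}ᶜ
      {(0 : EuclideanSpace ℝ (Fin n))}ᶜ ∧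
    (∀ x : EuclideanSpace ℝ (Fin n), x ≠ 0 →
      hGauge (polarBodyN K) (gradient (hGauge K) x) = hGauge K x) ∧
    ContDiffOn ℝ (⊤ : ℕ∞) (hGauge (polarBodyN K)) {0}ᶜ ∧
    (∀ y : EuclideanSpace ℝ (Fin n), ‖y‖ = 1 →
      ∀ v : EuclideanSpace ℝ (Fin n), v ≠ 0 →
        0 < fderiv ℝ (fderiv ℝ (hGauge (polarBodyN K))) y v v) := by
  have hfr : ∀ x ∈ frontier K, x ≠ 0 := fun x hx => frontier_ne_zero hKconv hK0 hx
  refine ⟨⟨fun x hx => grad_mem_frontier_polar hKcomp hKconv hK0 hsmooth hx,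
    fun a ha b hb hab =>
      gradient_injOn hKcomp hK0 hsmooth hhess (hfr a ha) (hfr b hb) hab,
    ?_⟩, ?_, ?_, ⟨?_, ?_, ?_⟩, ?_, ?_, ?_⟩
  · intro y hy
    obtain ⟨x, hxf, hxy, hgx⟩ := grad_frontier_surj hKcomp hKconv hK0 hsmooth hy
    exact ⟨x, hxf, hgx⟩
  · intro y hy
    obtain ⟨x, hxf, hxy, hgx⟩ := grad_frontier_surj hKcomp hKconv hK0 hsmooth hy
    refine ⟨x, ⟨hxf, hxy⟩, ?_⟩
    rintro x' ⟨hx'f, hx'y⟩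
    have h1 : gradient (hGauge K) x' = y := gradient_eq_of_inner_one hKcomp hKconv hK0 hsmooth
      ((polar_isClosed K).frontier_subset hy) ((frontier_iff hKconv hK0).1 hx'f) hx'y
    exact gradient_injOn hKcomp hK0 hsmooth hhess (hfr x' hx'f) (hfr x hxf) (h1.trans hgx.symm)
  · intro y hy x hxf hxy
    exact gradient_eq_of_inner_one hKcomp hKconv hK0 hsmooth
      ((polar_isClosed K).frontier_subset hy) ((frontier_iff hKconv hK0).1 hxf) hxy
  · intro x hx
    exact Set.mem_compl_singleton_iff.2
      (grad_ne_zero hKcomp hKconv hK0 hsmooth (Set.mem_compl_singleton_iff.1 hx))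
  · intro a ha b hb hab
    exact gradient_injOn hKcomp hK0 hsmooth hhess
      (Set.mem_compl_singleton_iff.1 ha) (Set.mem_compl_singleton_iff.1 hb) hab
  · intro y hy
    obtain ⟨x, hx0, hgx⟩ := grad_surj_nonzero hKcomp hKconv hK0 hsmooth
      (Set.mem_compl_singleton_iff.1 hy)
    exact ⟨x, Set.mem_compl_singleton_iff.2 hx0, hgx⟩
  · intro x hx
    exact hGauge_polar_grad hKcomp hKconv hK0 hsmooth hx
  · intro y hy
    exact (polar_contDiffAt hKcomp hKconv hK0 hsmooth hhess
      (Set.mem_compl_singleton_iff.1 hy)).contDiffWithinAt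
  · intro y hy v hv
    have hy0 : y ≠ 0 := by intro h; rw [h, norm_zero] at hy; norm_num at hy
    exact polar_hess_pos hKcomp hKconv hK0 hsmooth hhess hy0 hv
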